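/- For n ≥ 1 and 0 ≤ k < n, the number of inversion sequences of length n avoiding the consecutive pattern 100 and ending in k satisfies |I_{n,k}(100)| = |I_{n-1}(100)| - Σ_{j=k+1}^{n-3} |I_{n-2,j}(100)|, where |I_0(100)| = 1 by convention. -/

import Mathlib

def IsInvSeq {n : ℕ} (e : Fin n → Fin n) : Prop := ∀ i : Fin n, (e i : ℕ) ≤ (i : ℕ)

def extSeq {n : ℕ} (e : Fin n → Fin n) : ℕ → ℕ := fun i => if h : i < n then (e ⟨i, h⟩ : ℕ) else 0

/-- `e` contains the consecutive pattern 100: `e_i > e_{i+1} = e_{i+2}`. -/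
def Contains100 {n : ℕ} (e : Fin n → Fin n) : Prop :=
  ∃ i : ℕ, i + 2 < n ∧ extSeq e (i + 1) < extSeq e i ∧ extSeq e (i + 1) = extSeq e (i + 2)

/-- `|I_n(100)|`. -/
noncomputable def I100 (n : ℕ) : ℕ := Nat.card {e : Fin n → Fin n // IsInvSeq e ∧ ¬ Contains100 e}

/-- `|I_{n,k}(100)|`: those with last entry equal to `k`. -/
noncomputable def I100k (n k : ℕ) : ℕ :=
  Nat.card {e : Fin n → Fin n // IsInvSeq e ∧ ¬ Contains100 e ∧ extSeq e (n - 1) = k}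

section AuxProof

/-- appending `k` to `f` would create a new 100-pattern at the end -/
def NewPat {N : ℕ} (f : Fin N → Fin N) (k : ℕ) : Prop :=
  ∃ i, i + 2 = N ∧ extSeq f (i + 1) < extSeq f i ∧ extSeq f (i + 1) = k

def ext1 {N : ℕ} (f : Fin N → Fin N) (k : ℕ) : Fin (N + 1) → Fin (N + 1) :=
  fun i => if h : (i : ℕ) < N then ⟨(f ⟨i, h⟩ : ℕ), by have := (f ⟨i, h⟩).isLt; omega⟩
           else ⟨min k N, by omega⟩

def trunc {N : ℕ} (e : Fin (N + 1) → Fin (N + 1)) : Fin N → Fin N :=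
  fun i => ⟨min (e ⟨i, by omega⟩ : ℕ) i, by have := i.isLt; omega⟩

lemma extSeq_ext1 {N : ℕ} (f : Fin N → Fin N) (k : ℕ) (hk : k ≤ N) (i : ℕ) :
    extSeq (ext1 f k) i = if i < N then extSeq f i else if i = N then k else 0 := by
  unfold extSeq ext1
  by_cases h1 : i < N
  · simp [h1, Nat.lt_succ_of_lt h1]
  · by_cases h2 : i = N
    · simp [h1, h2, Nat.min_eq_left hk]
    · simp [h1, h2, show ¬ i < N + 1 by omega]

lemma extSeq_trunc {N : ℕ} (e : Fin (N + 1) → Fin (N + 1)) (he : IsInvSeq e) (i : ℕ)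
    (hi : i < N) : extSeq (trunc e) i = extSeq e i := by
  simp only [extSeq, trunc, dif_pos hi, dif_pos (show i < N + 1 by omega)]
  exact min_eq_left (he _)

lemma isInvSeq_ext1 {N : ℕ} {f : Fin N → Fin N} (hf : IsInvSeq f) (k : ℕ) (hk : k ≤ N) :
    IsInvSeq (ext1 f k) := by
  intro i
  unfold ext1
  by_cases h : (i : ℕ) < N
  · simpa [h] using hf ⟨i, h⟩
  · have hi : (i : ℕ) = N := by have := i.isLt; omega
    simp only [dif_neg h, hi]
    omega

lemma isInvSeq_trunc {N : ℕ} (e : Fin (N + 1) → Fin (N + 1)) : IsInvSeq (trunc e) := by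
  intro i; exact min_le_right _ _

lemma ext1_trunc {N : ℕ} {e : Fin (N + 1) → Fin (N + 1)} (he : IsInvSeq e) {k : ℕ}
    (hek : extSeq e N = k) : ext1 (trunc e) k = e := by
  have hk : k ≤ N := by
    rw [← hek]; simp only [extSeq, dif_pos (Nat.lt_succ_self N)]
    exact he _
  funext i
  by_cases h : (i : ℕ) < N
  · apply Fin.ext
    simp only [ext1, dif_pos h, trunc]
    have : (⟨(i : ℕ), by omega⟩ : Fin (N + 1)) = i := by apply Fin.ext; rfl
    rw [this]
    exact min_eq_left (he i)
  · have hiN : (i : ℕ) = N := by have := i.isLt; omega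
    apply Fin.ext
    simp only [ext1, dif_neg h, min_eq_left hk]
    have : i = ⟨N, Nat.lt_succ_self N⟩ := by apply Fin.ext; exact hiN
    rw [this]
    simpa only [extSeq, dif_pos (Nat.lt_succ_self N)] using hek.symm

lemma trunc_ext1 {N : ℕ} {f : Fin N → Fin N} (hf : IsInvSeq f) (k : ℕ) :
    trunc (ext1 f k) = f := by
  funext i
  apply Fin.ext
  simp only [trunc, ext1, dif_pos i.isLt]
  have : (⟨((⟨(i : ℕ), i.isLt⟩ : Fin N) : ℕ), by have := i.isLt; omega⟩ : Fin N) = i := rfl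
  exact (min_eq_left (hf i)).trans rfl

lemma contains_ext1 {N : ℕ} (f : Fin N → Fin N) (k : ℕ) (hk : k ≤ N) :
    Contains100 (ext1 f k) ↔ Contains100 f ∨ NewPat f k := by
  constructor
  · rintro ⟨i, hi, h1, h2⟩
    rw [extSeq_ext1 f k hk, extSeq_ext1 f k hk] at h1
    rw [extSeq_ext1 f k hk, extSeq_ext1 f k hk] at h2
    by_cases hc : i + 2 < N
    · left
      refine ⟨i, hc, ?_, ?_⟩
      · simpa [show i + 1 < N by omega, show i < N by omega] using h1
      · simpa [show i + 1 < N by omega, show i + 2 < N by omega] using h2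
    · have hc2 : i + 2 = N := by omega
      right
      refine ⟨i, hc2, ?_, ?_⟩
      · simpa [show i + 1 < N by omega, show i < N by omega] using h1
      · simpa [show i + 1 < N by omega, show ¬ (i + 2 < N) by omega, hc2] using h2
  · rintro (⟨i, hi, h1, h2⟩ | ⟨i, hi, h1, h2⟩)
    · refine ⟨i, by omega, ?_, ?_⟩
      · rw [extSeq_ext1 f k hk, extSeq_ext1 f k hk,
          if_pos (show i + 1 < N by omega), if_pos (show i < N by omega)]
        exact h1
      · rw [extSeq_ext1 f k hk, extSeq_ext1 f k hk,
          if_pos (show i + 1 < N by omega), if_pos (show i + 2 < N by omega)]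
        exact h2
    · refine ⟨i, by omega, ?_, ?_⟩
      · rw [extSeq_ext1 f k hk, extSeq_ext1 f k hk,
          if_pos (show i + 1 < N by omega), if_pos (show i < N by omega)]
        exact h1
      · rw [extSeq_ext1 f k hk, extSeq_ext1 f k hk,
          if_pos (show i + 1 < N by omega), if_neg (show ¬ (i + 2 < N) by omega),
          if_pos hi]
        exact h2


noncomputable def mainEquiv {N : ℕ} (Q : (Fin N → Fin N) → Prop) (k : ℕ) (hk : k ≤ N) :
    {e : Fin (N + 1) → Fin (N + 1) //
        IsInvSeq e ∧ ¬Contains100 e ∧ extSeq e N = k ∧ Q (trunc e)} ≃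
    {f : Fin N → Fin N // (IsInvSeq f ∧ ¬Contains100 f) ∧ ¬NewPat f k ∧ Q f} where
  toFun e := ⟨trunc e.1, by
    obtain ⟨e, h1, h2, h3, h4⟩ := e
    have hre : ext1 (trunc e) k = e := ext1_trunc h1 h3
    have hnc : ¬ (Contains100 (trunc e) ∨ NewPat (trunc e) k) := by
      rw [← contains_ext1 _ k hk, hre]; exact h2
    exact ⟨⟨isInvSeq_trunc e, fun hc => hnc (Or.inl hc)⟩, fun hc => hnc (Or.inr hc), h4⟩⟩
  invFun f := ⟨ext1 f.1 k, by
    obtain ⟨f, ⟨h1, h2⟩, h3, h4⟩ := f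
    refine ⟨isInvSeq_ext1 h1 k hk, ?_, ?_, ?_⟩
    · rw [contains_ext1 _ k hk]; tauto
    · rw [extSeq_ext1 _ k hk]; simp
    · rw [trunc_ext1 h1]; exact h4⟩
  left_inv e := Subtype.ext (ext1_trunc e.2.1 e.2.2.2.1)
  right_inv f := Subtype.ext (trunc_ext1 f.2.1.1 k)

lemma card_split {α : Type*} [Finite α] (p q : α → Prop) :
    Nat.card {x // p x} = Nat.card {x // p x ∧ q x} + Nat.card {x // p x ∧ ¬ q x} := by
  classical
  rw [← Nat.card_sum]
  apply Nat.card_congr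
  exact ((Equiv.sumCompl (fun x : {x // p x} => q x.1)).symm.trans
    (Equiv.sumCongr (Equiv.subtypeSubtypeEquivSubtypeInter p q)
      (Equiv.subtypeSubtypeEquivSubtypeInter p (fun x => ¬ q x))))

lemma nat_card_subtype {α : Type*} [Fintype α] (p : α → Prop) [DecidablePred p] :
    Nat.card {x // p x} = (Finset.univ.filter p).card := by
  rw [Nat.card_eq_fintype_card, Fintype.card_subtype]

lemma card_last_gt (M k : ℕ) :
    Nat.card {g : Fin (M + 1) → Fin (M + 1) //
        IsInvSeq g ∧ ¬Contains100 g ∧ k < extSeq g M} =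
    ∑ j ∈ Finset.Icc (k + 1) M, I100k (M + 1) j := by
  classical
  rw [nat_card_subtype]
  rw [Finset.card_eq_sum_card_fiberwise
    (f := fun g => extSeq g M) (t := Finset.Icc (k + 1) M) (fun g hg => by
      simp only [Finset.mem_coe, Finset.mem_filter] at hg
      rw [Finset.mem_coe, Finset.mem_Icc]
      have h1 := hg.2.1 ⟨M, Nat.lt_succ_self M⟩
      have h0 : ((⟨M, Nat.lt_succ_self M⟩ : Fin (M + 1)) : ℕ) = M := rfl
      rw [h0] at h1
      have h2 : extSeq g M = (g ⟨M, Nat.lt_succ_self M⟩ : ℕ) := dif_pos _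
      have h3 := hg.2.2.2
      show k + 1 ≤ extSeq g M ∧ extSeq g M ≤ M
      omega)]
  apply Finset.sum_congr rfl
  intro j hj
  rw [Finset.mem_Icc] at hj
  rw [I100k]
  simp only [Nat.add_sub_cancel]
  rw [nat_card_subtype]
  congr 1
  ext g
  simp only [Finset.mem_filter, Finset.mem_univ, true_and, Finset.filter_filter]
  constructor
  · rintro ⟨⟨h1, h2, h3⟩, h4⟩; exact ⟨h1, h2, h4⟩
  · rintro ⟨h1, h2, h4⟩; exact ⟨⟨h1, h2, by omega⟩, h4⟩

lemma step1 {N : ℕ} (k : ℕ) (hk : k ≤ N) :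
    I100k (N + 1) k =
      Nat.card {f : Fin N → Fin N // (IsInvSeq f ∧ ¬Contains100 f) ∧ ¬NewPat f k} := by
  rw [I100k]
  have h1 : Nat.card {e : Fin (N + 1) → Fin (N + 1) //
        IsInvSeq e ∧ ¬Contains100 e ∧ extSeq e (N + 1 - 1) = k}
      = Nat.card {e : Fin (N + 1) → Fin (N + 1) //
        IsInvSeq e ∧ ¬Contains100 e ∧ extSeq e N = k ∧ (fun _ => True) (trunc e)} := by
    apply Nat.card_congr
    apply Equiv.subtypeEquivRight
    intro e
    simp only [Nat.add_sub_cancel, and_true]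
  rw [h1, Nat.card_congr (mainEquiv (fun _ => True) k hk)]
  apply Nat.card_congr
  apply Equiv.subtypeEquivRight
  intro f
  simp only [and_true]

lemma step2 {N : ℕ} (k : ℕ) :
    I100 N = Nat.card {f : Fin N → Fin N // (IsInvSeq f ∧ ¬Contains100 f) ∧ NewPat f k}
      + Nat.card {f : Fin N → Fin N // (IsInvSeq f ∧ ¬Contains100 f) ∧ ¬NewPat f k} := by
  rw [I100]
  exact card_split _ _

lemma step3 (m k : ℕ) (hk : k ≤ m + 1) :
    Nat.card {f : Fin (m + 2) → Fin (m + 2) //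
        (IsInvSeq f ∧ ¬Contains100 f) ∧ NewPat f k}
      = ∑ j ∈ Finset.Icc (k + 1) m, I100k (m + 1) j := by
  have e1 : {f : Fin (m + 2) → Fin (m + 2) // (IsInvSeq f ∧ ¬Contains100 f) ∧ NewPat f k}
      ≃ {e : Fin (m + 2) → Fin (m + 2) // IsInvSeq e ∧ ¬Contains100 e ∧
          extSeq e (m + 1) = k ∧ (fun g => k < extSeq g m) (trunc e)} := by
    apply Equiv.subtypeEquivRight
    intro f
    constructor
    · rintro ⟨⟨h1, h2⟩, i, hi, hlt, hek⟩
      have him : i = m := by omega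
      rw [him] at hlt hek
      refine ⟨h1, h2, hek, ?_⟩
      show k < extSeq (trunc f) m
      rw [extSeq_trunc f h1 m (by omega)]
      omega
    · rintro ⟨h1, h2, hek, hQ⟩
      replace hQ : k < extSeq (trunc f) m := hQ
      rw [extSeq_trunc f h1 m (by omega)] at hQ
      exact ⟨⟨h1, h2⟩, m, rfl, by omega, hek⟩
  rw [Nat.card_congr e1,
    Nat.card_congr ((mainEquiv (fun g => k < extSeq g m) k hk).symm.symm)]
  rw [← card_last_gt m k]
  apply Nat.card_congr
  apply Equiv.subtypeEquivRight
  intro g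
  constructor
  · rintro ⟨⟨h1, h2⟩, _, hQ⟩; exact ⟨h1, h2, hQ⟩
  · rintro ⟨h1, h2, hQ⟩
    refine ⟨⟨h1, h2⟩, ?_, hQ⟩
    rintro ⟨i, hi, hlt, hek⟩
    have him : i + 1 = m := by omega
    rw [him] at hek
    omega

lemma step3' (m : ℕ) :
    Nat.card {f : Fin (m + 2) → Fin (m + 2) //
        (IsInvSeq f ∧ ¬Contains100 f) ∧ NewPat f (m + 2)} = 0 := by
  rw [Nat.card_eq_zero]
  left
  constructor
  rintro ⟨f, ⟨h1, _⟩, i, hi, hlt, hek⟩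
  have him : i + 1 = m + 1 := by omega
  rw [him] at hek
  have h2 : extSeq f (m + 1) = (f ⟨m + 1, by omega⟩ : ℕ) := dif_pos _
  have h3 := h1 ⟨m + 1, by omega⟩
  omega

lemma no_newpat_card {N : ℕ} (hN : N ≤ 1) (k : ℕ) :
    Nat.card {f : Fin N → Fin N // (IsInvSeq f ∧ ¬Contains100 f) ∧ ¬NewPat f k}
      = I100 N := by
  rw [I100]
  apply Nat.card_congr
  apply Equiv.subtypeEquivRight
  intro f
  constructor
  · rintro ⟨h, _⟩; exact h
  · intro h; exact ⟨h, by rintro ⟨i, hi, _⟩; omega⟩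

end AuxProof

theorem stmt4 (n : ℕ) (hn : 1 ≤ n) (k : ℕ) (hk : k < n) :
    I100k n k = I100 (n - 1) - ∑ j ∈ Finset.Icc (k + 1) (n - 3), I100k (n - 2) j := by
  obtain ⟨N, rfl⟩ : ∃ N, n = N + 1 := ⟨n - 1, by omega⟩
  have hk' : k ≤ N := by omega
  match N, hk' with
  | 0, hk' =>
    have hIcc : Finset.Icc (k + 1) (0 + 1 - 3) = ∅ := Finset.Icc_eq_empty (by omega)
    rw [hIcc, Finset.sum_empty, Nat.sub_zero, Nat.add_sub_cancel,
      step1 k hk', no_newpat_card (by omega) k]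
  | 1, hk' =>
    have hIcc : Finset.Icc (k + 1) (1 + 1 - 3) = ∅ := Finset.Icc_eq_empty (by omega)
    rw [hIcc, Finset.sum_empty, Nat.sub_zero, Nat.add_sub_cancel,
      step1 k hk', no_newpat_card (by omega) k]
  | (m + 2), hk' =>
    have h1 : m + 2 + 1 - 1 = m + 2 := by omega
    have h2 : m + 2 + 1 - 3 = m := by omega
    have h3 : m + 2 + 1 - 2 = m + 1 := by omega
    rw [h1, h2, h3, step1 k hk', step2 (N := m + 2) k]
    by_cases hk2 : k ≤ m + 1
    · rw [step3 m k hk2]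
      omega
    · have hkm : k = m + 2 := by omega
      subst hkm
      rw [step3' m]
      have hIcc : Finset.Icc (m + 2 + 1) m = ∅ := Finset.Icc_eq_empty (by omega)
      rw [hIcc, Finset.sum_empty]
      omega
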